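/- arXiv:1608.01612 — 2 statements merged into one kernel-verified Lean document; each statement's English description precedes it below -/
import Mathlib

section
/- For every finite connected graph G, the L¹-extremal observable spread satisfies csobs(G) ≤ 2/φ_G, i.e., (1/2)·csobs(G) ≤ 1/φ_G. -/
open Finset MeasureTheory Classical

noncomputable section

def wlen {V : Type*} {G : SimpleGraph V} (ω : V → ℝ) {u v : V} (w : G.Walk u v) : ℝ :=
  (w.darts.map (fun d => (ω d.toProd.1 + ω d.toProd.2) / 2)).sum

noncomputable def distw {V : Type*} (G : SimpleGraph V) (ω : V → ℝ) (u v : V) : ℝ :=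
  sInf {x | ∃ w : G.Walk u v, wlen ω w = x}

noncomputable def vbdry {V : Type*} [Fintype V] (G : SimpleGraph V) (U : Finset V) : Finset V :=
  U.filter (fun v => ∃ u ∉ U, G.Adj v u)

noncomputable def phi {V : Type*} [Fintype V] (G : SimpleGraph V) : ℝ :=
  sInf { r | ∃ U : Finset V, U.Nonempty ∧
    ((U \ vbdry G U).card : ℝ) ≤ (Fintype.card V : ℝ) / 2 ∧
    r = ((vbdry G U).card : ℝ) / (U.card : ℝ) }

section aux

variable {V : Type*} [Fintype V] (G : SimpleGraph V)

lemma phi_nonneg : 0 ≤ phi G := by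
  apply Real.sInf_nonneg
  rintro r ⟨U, hU, hhalf, rfl⟩
  positivity

lemma phi_le_ratio (U : Finset V) (hU : U.Nonempty)
    (hhalf : ((U \ vbdry G U).card : ℝ) ≤ (Fintype.card V : ℝ) / 2) :
    phi G ≤ ((vbdry G U).card : ℝ) / (U.card : ℝ) := by
  apply csInf_le
  · refine ⟨0, ?_⟩
    rintro r ⟨U', hU', hhalf', rfl⟩
    positivity
  · exact ⟨U, hU, hhalf, rfl⟩

lemma exists_adj (hG : G.Connected) (hn : 2 ≤ Fintype.card V) (v : V) :
    ∃ u, G.Adj v u := by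
  obtain ⟨u, hu⟩ := Fintype.exists_ne_of_one_lt_card (by omega) v
  obtain ⟨p⟩ := hG.preconnected v u
  cases p with
  | nil => exact absurd rfl hu.symm
  | cons h _ => exact ⟨_, h⟩

lemma phi_le_one (hG : G.Connected) (hn : 2 ≤ Fintype.card V) : phi G ≤ 1 := by
  obtain ⟨v⟩ := hG.nonempty
  obtain ⟨u, hu⟩ := exists_adj G hG hn v
  have hvb : vbdry G {v} = {v} := by
    apply Finset.filter_true_of_mem
    intro x hx
    simp only [Finset.mem_singleton] at hx
    subst hx
    exact ⟨u, by simp [G.ne_of_adj hu |>.symm, hu], hu⟩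
  have := phi_le_ratio G {v} ⟨v, by simp⟩ (by
    rw [hvb]; simp; positivity)
  rw [hvb] at this
  simpa using this

lemma vbdry_nonempty (hG : G.Connected) (U : Finset V) (hU : U.Nonempty)
    (hhalf : ((U \ vbdry G U).card : ℝ) ≤ (Fintype.card V : ℝ) / 2) :
    (vbdry G U).Nonempty := by
  rw [Finset.nonempty_iff_ne_empty]
  intro hemp
  have hclosed : ∀ v ∈ U, ∀ u, G.Adj v u → u ∈ U := by
    intro v hv u hadj
    by_contra hu
    have : v ∈ vbdry G U := Finset.mem_filter.2 ⟨hv, u, hu, hadj⟩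
    simp [hemp] at this
  have huniv : U = Finset.univ := by
    obtain ⟨v0, hv0⟩ := hU
    have key : ∀ (a b : V) (p : G.Walk a b), a ∈ U → b ∈ U := by
      intro a b p
      induction p with
      | nil => exact id
      | cons h _ ih => intro ha; exact ih (hclosed _ ha _ h)
    apply Finset.eq_univ_of_forall
    intro w
    obtain ⟨p⟩ := hG.preconnected v0 w
    exact key _ _ p hv0
  have hcard : 1 ≤ Fintype.card V := Fintype.card_pos_iff.2 hG.nonempty
  rw [huniv] at hemp
  rw [huniv, hemp] at hhalf
  simp only [Finset.sdiff_empty, Finset.card_univ] at hhalf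
  have : (0:ℝ) < Fintype.card V := by exact_mod_cast hcard
  linarith

lemma phi_pos (hG : G.Connected) (hn : 2 ≤ Fintype.card V) : 0 < phi G := by
  have hcard : 1 ≤ Fintype.card V := Fintype.card_pos_iff.2 hG.nonempty
  have hcpos : (0:ℝ) < Fintype.card V := by exact_mod_cast hcard
  have hlb : (1 : ℝ) / (Fintype.card V : ℝ) ≤ phi G := by
    apply le_csInf
    · obtain ⟨v⟩ := hG.nonempty
      obtain ⟨u, hu⟩ := exists_adj G hG hn v
      refine ⟨_, {v}, ⟨v, by simp⟩, ?_, rfl⟩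
      have hvb : vbdry G {v} = {v} := by
        apply Finset.filter_true_of_mem
        intro x hx
        simp only [Finset.mem_singleton] at hx
        subst hx
        exact ⟨u, by simp [G.ne_of_adj hu |>.symm, hu], hu⟩
      rw [hvb]; simp; positivity
    · rintro r ⟨U, hU, hhalf, rfl⟩
      obtain ⟨b, hb⟩ := vbdry_nonempty G hG U hU hhalf
      have h1 : (1:ℝ) ≤ (vbdry G U).card := by
        exact_mod_cast Finset.card_pos.2 ⟨b, hb⟩
      have h2 : (U.card : ℝ) ≤ Fintype.card V := by
        exact_mod_cast Finset.card_le_univ U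
      have h3 : (0:ℝ) < U.card := by exact_mod_cast Finset.card_pos.2 hU
      rw [div_le_div_iff₀ hcpos h3]
      nlinarith
  calc (0:ℝ) < 1 / Fintype.card V := by positivity
    _ ≤ phi G := hlb

end aux

section claim
variable {V : Type*} [Fintype V] {G : SimpleGraph V}

lemma key_half (hG : G.Connected) (hn : 2 ≤ Fintype.card V)
    (A D : Finset V) (hunion : ∀ v, v ∈ A ∨ v ∈ D)
    (hDbd : ∀ ⦃v u⦄, G.Adj v u → v ∈ D → u ∉ D → v ∈ A)
    (hle : A.card ≤ D.card) :
    phi G * (A.card : ℝ) ≤ ((A ∩ D).card : ℝ) := by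
  have hφ0 := phi_nonneg G
  have hφ1 := phi_le_one G hG hn
  set n := Fintype.card V with hn_def
  by_cases hA0 : A = ∅
  · simp [hA0]
  have hAne : A.Nonempty := Finset.nonempty_iff_ne_empty.2 hA0
  have hDne : D.Nonempty := Finset.card_pos.1 (lt_of_lt_of_le (Finset.card_pos.2 hAne) hle)
  set B := vbdry G D with hB_def
  have hBD : B ⊆ D := Finset.filter_subset _ _
  have hBAD : B ⊆ A ∩ D := by
    intro v hv
    obtain ⟨hvD, u, huD, hadj⟩ := Finset.mem_filter.1 hv
    exact Finset.mem_inter.2 ⟨hDbd hadj hvD huD, hvD⟩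
  have hsb : ((B.card : ℝ)) ≤ ((A ∩ D).card : ℝ) := by
    exact_mod_cast Finset.card_le_card hBAD
  by_cases h1 : (((D \ B).card : ℝ)) ≤ (n : ℝ) / 2
  · have hphi := phi_le_ratio G D hDne h1
    have hDpos : (0:ℝ) < D.card := by exact_mod_cast Finset.card_pos.2 hDne
    have h2 : phi G * (D.card : ℝ) ≤ (B.card : ℝ) := (le_div_iff₀ hDpos).1 hphi
    have h3 : phi G * (A.card : ℝ) ≤ phi G * (D.card : ℝ) := by
      apply mul_le_mul_of_nonneg_left _ hφ0
      exact_mod_cast hle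
    linarith
  push_neg at h1
  by_cases hIuniv : (D \ B) = Finset.univ
  · have hDuniv : D = Finset.univ :=
      Finset.eq_univ_of_forall fun v => (Finset.mem_sdiff.1 (hIuniv ▸ Finset.mem_univ v)).1
    have : A ∩ D = A := by rw [hDuniv]; exact Finset.inter_univ A
    rw [this]
    nlinarith [show (0:ℝ) ≤ (A.card : ℝ) by positivity]
  · set U := Finset.univ \ (D \ B) with hU_def
    have hUne : U.Nonempty := by
      rw [Finset.sdiff_nonempty]
      intro hsub
      exact hIuniv (Finset.eq_univ_of_forall fun v => hsub (Finset.mem_univ v))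
    have hsubB : vbdry G U ⊆ B := by
      intro v hv
      obtain ⟨hvU, u, huU, hadj⟩ := Finset.mem_filter.1 hv
      have huI : u ∈ D \ B := by
        by_contra hu
        exact huU (Finset.mem_sdiff.2 ⟨Finset.mem_univ u, hu⟩)
      obtain ⟨huD, huB⟩ := Finset.mem_sdiff.1 huI
      by_cases hvD : v ∈ D
      · have hvI : v ∉ D \ B := (Finset.mem_sdiff.1 hvU).2
        by_contra hvB
        exact hvI (Finset.mem_sdiff.2 ⟨hvD, hvB⟩)
      · exact absurd (Finset.mem_filter.2 ⟨huD, v, hvD, hadj.symm⟩) huB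
    have hUcard : (U.card : ℝ) = (n : ℝ) - ((D \ B).card : ℝ) := by
      rw [hU_def, Finset.card_sdiff_of_subset (Finset.subset_univ _), Finset.card_univ]
      have h := Finset.card_le_univ (D \ B)
      rw [Nat.cast_sub h]
    have hadm : (((U \ vbdry G U).card : ℝ)) ≤ (n : ℝ) / 2 := by
      have hc : ((U \ vbdry G U).card : ℝ) ≤ (U.card : ℝ) := by
        exact_mod_cast Finset.card_le_card (Finset.sdiff_subset)
      rw [hUcard] at hc
      linarith
    have hphiU := phi_le_ratio G U hUne hadm
    have hUpos : (0:ℝ) < U.card := by exact_mod_cast Finset.card_pos.2 hUne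
    have hkey : phi G * (U.card : ℝ) ≤ (B.card : ℝ) := by
      have h2 : phi G * (U.card : ℝ) ≤ ((vbdry G U).card : ℝ) := (le_div_iff₀ hUpos).1 hphiU
      have : ((vbdry G U).card : ℝ) ≤ (B.card : ℝ) := by
        exact_mod_cast Finset.card_le_card hsubB
      linarith
    -- arithmetic
    have hunion_univ : A ∪ D = Finset.univ := Finset.eq_univ_of_forall fun v =>
      Finset.mem_union.2 (hunion v)
    have hcount : ((n : ℝ)) + ((A ∩ D).card : ℝ) = (A.card : ℝ) + (D.card : ℝ) := by
      have := Finset.card_union_add_card_inter A D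
      rw [hunion_univ, Finset.card_univ] at this
      exact_mod_cast this
    have hIB : ((D \ B).card : ℝ) + (B.card : ℝ) = (D.card : ℝ) := by
      exact_mod_cast Finset.card_sdiff_add_card_eq_card hBD
    have ha_eq : (A.card : ℝ) = ((n : ℝ) - ((D \ B).card : ℝ)) + (((A ∩ D).card : ℝ) - (B.card : ℝ)) := by
      linarith
    have e2 : phi G * (((A ∩ D).card : ℝ) - (B.card : ℝ)) ≤ 1 * (((A ∩ D).card : ℝ) - (B.card : ℝ)) :=
      mul_le_mul_of_nonneg_right hφ1 (by linarith)
    have expand : phi G * (A.card : ℝ) =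
        phi G * ((n : ℝ) - ((D \ B).card : ℝ)) + phi G * (((A ∩ D).card : ℝ) - (B.card : ℝ)) := by
      rw [ha_eq]; ring
    rw [hUcard] at hkey
    linarith

lemma claim_main (hG : G.Connected) (hn : 2 ≤ Fintype.card V)
    (A D : Finset V) (hunion : ∀ v, v ∈ A ∨ v ∈ D)
    (hAbd : ∀ ⦃v u⦄, G.Adj v u → v ∈ A → u ∉ A → v ∈ D)
    (hDbd : ∀ ⦃v u⦄, G.Adj v u → v ∈ D → u ∉ D → v ∈ A) :
    phi G * ((A.card : ℝ) * (D.card : ℝ)) ≤ (Fintype.card V : ℝ) * ((A ∩ D).card : ℝ) := by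
  have hφ0 := phi_nonneg G
  have hs0 : (0:ℝ) ≤ ((A ∩ D).card : ℝ) := by positivity
  rcases le_total A.card D.card with h | h
  · have k := key_half hG hn A D hunion hDbd h
    have hd_le : (D.card : ℝ) ≤ (Fintype.card V : ℝ) := by exact_mod_cast Finset.card_le_univ D
    have hd0 : (0:ℝ) ≤ (D.card : ℝ) := by positivity
    calc phi G * ((A.card : ℝ) * (D.card : ℝ)) = (phi G * (A.card : ℝ)) * (D.card : ℝ) := by ring
      _ ≤ ((A ∩ D).card : ℝ) * (D.card : ℝ) := mul_le_mul_of_nonneg_right k hd0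
      _ ≤ ((A ∩ D).card : ℝ) * (Fintype.card V : ℝ) := mul_le_mul_of_nonneg_left hd_le hs0
      _ = (Fintype.card V : ℝ) * ((A ∩ D).card : ℝ) := by ring
  · have k := key_half hG hn D A (fun v => (hunion v).symm) hAbd h
    rw [Finset.inter_comm] at k
    have ha_le : (A.card : ℝ) ≤ (Fintype.card V : ℝ) := by exact_mod_cast Finset.card_le_univ A
    have ha0 : (0:ℝ) ≤ (A.card : ℝ) := by positivity
    calc phi G * ((A.card : ℝ) * (D.card : ℝ)) = (phi G * (D.card : ℝ)) * (A.card : ℝ) := by ring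
      _ ≤ ((A ∩ D).card : ℝ) * (A.card : ℝ) := mul_le_mul_of_nonneg_right k ha0
      _ ≤ ((A ∩ D).card : ℝ) * (Fintype.card V : ℝ) := mul_le_mul_of_nonneg_left ha_le hs0
      _ = (Fintype.card V : ℝ) * ((A ∩ D).card : ℝ) := by ring
end claim

section analytic
variable {V : Type*} {G : SimpleGraph V}

lemma wlen_nonneg {ω : V → ℝ} (hω : ∀ v, 0 ≤ ω v) {u v : V} (w : G.Walk u v) :
    0 ≤ wlen ω w := by
  apply List.sum_nonneg
  intro x hx
  obtain ⟨d, _, rfl⟩ := List.mem_map.1 hx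
  have := hω d.toProd.1
  have := hω d.toProd.2
  positivity

lemma distw_le_edge {ω : V → ℝ} (hω : ∀ v, 0 ≤ ω v) {u v : V} (hadj : G.Adj u v) :
    distw G ω u v ≤ (ω u + ω v) / 2 := by
  apply csInf_le
  · exact ⟨0, by rintro x ⟨w, rfl⟩; exact wlen_nonneg hω w⟩
  · exact ⟨SimpleGraph.Walk.cons hadj SimpleGraph.Walk.nil, by simp [wlen]⟩

variable [Fintype V]

lemma main_bound (hG : G.Connected) (hn : 2 ≤ Fintype.card V)
    (ω : V → ℝ) (hω : ∀ v, 0 ≤ ω v) (f : V → ℝ)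
    (hf : ∀ x y, |f x - f y| ≤ distw G ω x y) :
    (∑ x : V, ∑ y : V, |f x - f y|) ≤
      2 * ((Fintype.card V : ℝ) / phi G) * (∑ v : V, ω v) := by
  have hφ : 0 < phi G := phi_pos G hG hn
  set n : ℕ := Fintype.card V with hn_def
  set g : V → ℝ := fun x => f x + ω x / 2 with hg_def
  set h : V → ℝ := fun x => f x - ω x / 2 with hh_def
  have hedge : ∀ {u v : V}, G.Adj u v → h v ≤ g u := by
    intro u v hadj
    have h1 : f v - f u ≤ distw G ω v u := (abs_sub_le_iff.1 (hf v u)).1.trans (le_refl _)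
    have h2 : distw G ω v u ≤ (ω v + ω u) / 2 := distw_le_edge hω hadj.symm
    simp only [hg_def, hh_def]
    linarith
  have hgh : ∀ v, h v ≤ g v := by
    intro v; simp only [hg_def, hh_def]; have := hω v; linarith
  set A : ℝ → Finset V := fun t => Finset.univ.filter (fun x => t < g x) with hA_def
  set D : ℝ → Finset V := fun t => Finset.univ.filter (fun y => h y ≤ t) with hD_def
  -- pointwise combinatorial inequality
  have hptw : ∀ t : ℝ, ((A t).card : ℝ) * ((D t).card : ℝ) ≤
      ((n : ℝ) / phi G) * (((A t ∩ D t).card : ℝ)) := by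
    intro t
    have hunion : ∀ v, v ∈ A t ∨ v ∈ D t := by
      intro v
      by_cases hv : t < g v
      · exact Or.inl (Finset.mem_filter.2 ⟨Finset.mem_univ v, hv⟩)
      · push_neg at hv
        exact Or.inr (Finset.mem_filter.2 ⟨Finset.mem_univ v, (hgh v).trans hv⟩)
    have hAbd : ∀ ⦃v u : V⦄, G.Adj v u → v ∈ A t → u ∉ A t → v ∈ D t := by
      intro v u hadj hv hu
      have hgu : g u ≤ t := by
        by_contra hc; push_neg at hc
        exact hu (Finset.mem_filter.2 ⟨Finset.mem_univ u, hc⟩)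
      exact Finset.mem_filter.2 ⟨Finset.mem_univ v, (hedge hadj.symm).trans hgu⟩
    have hDbd : ∀ ⦃v u : V⦄, G.Adj v u → v ∈ D t → u ∉ D t → v ∈ A t := by
      intro v u hadj hv hu
      have hhu : t < h u := by
        by_contra hc; push_neg at hc
        exact hu (Finset.mem_filter.2 ⟨Finset.mem_univ u, hc⟩)
      exact Finset.mem_filter.2 ⟨Finset.mem_univ v, hhu.trans_le (hedge hadj)⟩
    have hclaim := claim_main hG hn (A t) (D t) hunion hAbd hDbd
    rw [div_mul_eq_mul_div, le_div_iff₀ hφ]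
    nlinarith [hclaim]
  -- integration
  have hint : ∀ a b : ℝ, Integrable ((Set.Ico a b).indicator (fun _ => (1:ℝ))) := by
    intro a b
    refine (integrable_indicator_iff measurableSet_Ico).2 ?_
    refine integrableOn_const ?_
    rw [Real.volume_Ico]
    exact ENNReal.ofReal_ne_top
  have hIval : ∀ a b : ℝ, (∫ t : ℝ, (Set.Ico a b).indicator (fun _ => (1:ℝ)) t) = max (b - a) 0 := by
    intro a b
    rw [integral_indicator_const (1:ℝ) measurableSet_Ico, measureReal_def, Real.volume_Ico,
      ENNReal.toReal_ofReal', smul_eq_mul, mul_one]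
  set FF : ℝ → ℝ := fun t => ∑ x : V, ∑ y : V, (Set.Ico (h y) (g x)).indicator (fun _ => (1:ℝ)) t
    with hFF_def
  set GG : ℝ → ℝ := fun t => ∑ v : V, (Set.Ico (h v) (g v)).indicator (fun _ => (1:ℝ)) t
    with hGG_def
  have hFF_int : Integrable FF :=
    integrable_finset_sum _ (fun x _ => integrable_finset_sum _ (fun y _ => hint _ _))
  have hGG_int : Integrable GG := integrable_finset_sum _ (fun v _ => hint _ _)
  have hFF_eq : ∀ t, FF t = ((A t).card : ℝ) * ((D t).card : ℝ) := by
    intro t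
    have step : ∀ x y : V, (Set.Ico (h y) (g x)).indicator (fun _ => (1:ℝ)) t =
        (if t < g x then (1:ℝ) else 0) * (if h y ≤ t then (1:ℝ) else 0) := by
      intro x y
      rw [Set.indicator_apply]
      by_cases h1 : t < g x <;> by_cases h2 : h y ≤ t <;>
        simp [Set.mem_Ico, h1, h2]
    simp only [hFF_def, step]
    rw [← Finset.sum_mul_sum]
    rw [Finset.sum_boole, Finset.sum_boole]
  have hGG_eq : ∀ t, GG t = ((A t ∩ D t).card : ℝ) := by
    intro t
    have hset : A t ∩ D t = Finset.univ.filter (fun v => h v ≤ t ∧ t < g v) := by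
      ext v
      simp [hA_def, hD_def, and_comm]
    have step : ∀ v : V, (Set.Ico (h v) (g v)).indicator (fun _ => (1:ℝ)) t =
        if h v ≤ t ∧ t < g v then (1:ℝ) else 0 := by
      intro v
      rw [Set.indicator_apply]
      simp [Set.mem_Ico]
    simp only [hGG_def, step]
    rw [Finset.sum_boole, hset]
  have hmono : ∀ t, FF t ≤ ((n : ℝ) / phi G) * GG t := by
    intro t
    rw [hFF_eq t, hGG_eq t]
    exact hptw t
  have hintFF : (∫ t : ℝ, FF t) = ∑ x : V, ∑ y : V, max (g x - h y) 0 := by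
    rw [integral_finset_sum _ (fun x _ => integrable_finset_sum _ (fun y _ => hint _ _))]
    refine Finset.sum_congr rfl (fun x _ => ?_)
    rw [integral_finset_sum _ (fun y _ => hint _ _)]
    exact Finset.sum_congr rfl (fun y _ => hIval _ _)
  have hintGG : (∫ t : ℝ, GG t) = ∑ v : V, ω v := by
    rw [integral_finset_sum _ (fun v _ => hint _ _)]
    refine Finset.sum_congr rfl (fun v _ => ?_)
    rw [hIval]
    have : g v - h v = ω v := by simp only [hg_def, hh_def]; ring
    rw [this, max_eq_left (hω v)]
  have hstep1 : (∑ x : V, ∑ y : V, max (g x - h y) 0) ≤ ((n : ℝ) / phi G) * (∑ v : V, ω v) := by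
    rw [← hintFF, ← hintGG]
    have hmn := integral_mono hFF_int (hGG_int.const_mul ((n : ℝ) / phi G)) hmono
    rwa [integral_const_mul] at hmn
  have habs : ∀ x y : V, |f x - f y| ≤ max (g x - h y) 0 + max (g y - h x) 0 := by
    intro x y
    have m1 : g x - h y ≤ max (g x - h y) 0 := le_max_left _ _
    have m2 : g y - h x ≤ max (g y - h x) 0 := le_max_left _ _
    have m3 : (0:ℝ) ≤ max (g x - h y) 0 := le_max_right _ _
    have m4 : (0:ℝ) ≤ max (g y - h x) 0 := le_max_right _ _
    have h1 : f x - f y ≤ g x - h y := by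
      simp only [hg_def, hh_def]; have := hω x; have := hω y; linarith
    have h2 : f y - f x ≤ g y - h x := by
      simp only [hg_def, hh_def]; have := hω x; have := hω y; linarith
    rw [abs_sub_le_iff]
    constructor <;> linarith
  have hsum : (∑ x : V, ∑ y : V, |f x - f y|) ≤
      (∑ x : V, ∑ y : V, max (g x - h y) 0) + (∑ x : V, ∑ y : V, max (g y - h x) 0) := by
    rw [← Finset.sum_add_distrib]
    apply Finset.sum_le_sum
    intro x _
    rw [← Finset.sum_add_distrib]
    exact Finset.sum_le_sum (fun y _ => habs x y)
  have hswap : (∑ x : V, ∑ y : V, max (g y - h x) 0) = (∑ x : V, ∑ y : V, max (g x - h y) 0) :=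
    Finset.sum_comm
  rw [hswap] at hsum
  linarith

end analytic

noncomputable def sobs {X : Type*} [Fintype X] (d : X → X → ℝ) : ℝ :=
  sSup { s | ∃ f : X → ℝ, (∀ x y, |f x - f y| ≤ d x y) ∧
    s = (∑ x : X, ∑ y : X, |f x - f y|) / ((Fintype.card X : ℝ))^2 }

noncomputable def spread {X : Type*} [Fintype X] (d : X → X → ℝ) : ℝ :=
  (∑ x : X, ∑ y : X, d x y) / ((Fintype.card X : ℝ))^2

noncomputable def csobs {V : Type*} [Fintype V] (G : SimpleGraph V) : ℝ :=
  sSup { s | ∃ ω : V → ℝ, (∀ v, 0 ≤ ω v) ∧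
    (∑ v : V, ω v) / (Fintype.card V : ℝ) ≤ 1 ∧ s = sobs (distw G ω) }

theorem stmt2 {V : Type*} [Fintype V] (G : SimpleGraph V) (hG : G.Connected) :
    (1 / 2) * csobs G ≤ 1 / phi G := by
  have hV : Nonempty V := hG.nonempty
  have hc1 : 1 ≤ Fintype.card V := Fintype.card_pos_iff.2 hV
  by_cases hn : 2 ≤ Fintype.card V
  · have hφ : 0 < phi G := phi_pos G hG hn
    have hcpos : (0:ℝ) < (Fintype.card V : ℝ) := by exact_mod_cast hc1
    have hmain : csobs G ≤ 2 / phi G := by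
      apply Real.sSup_le _ (by positivity)
      rintro s ⟨ω, hω, havg, rfl⟩
      apply Real.sSup_le _ (by positivity)
      rintro s' ⟨f, hf, rfl⟩
      have hb := main_bound hG hn ω hω f hf
      have hωsum : (∑ v : V, ω v) ≤ (Fintype.card V : ℝ) := by
        rw [div_le_one hcpos] at havg; exact havg
      have hn2 : (0:ℝ) < ((Fintype.card V : ℝ))^2 := by positivity
      rw [div_le_iff₀ hn2]
      have hfac : (0:ℝ) ≤ 2 * ((Fintype.card V : ℝ) / phi G) := by positivity
      calc (∑ x : V, ∑ y : V, |f x - f y|)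
          ≤ 2 * ((Fintype.card V : ℝ) / phi G) * (∑ v : V, ω v) := hb
        _ ≤ 2 * ((Fintype.card V : ℝ) / phi G) * (Fintype.card V : ℝ) :=
            mul_le_mul_of_nonneg_left hωsum hfac
        _ = 2 / phi G * ((Fintype.card V : ℝ))^2 := by
            field_simp
    calc (1 / 2) * csobs G ≤ (1 / 2) * (2 / phi G) := by linarith
      _ = 1 / phi G := by field_simp
  · have hcard1 : Fintype.card V = 1 := by omega
    have hsub : Subsingleton V := by
      rw [← Fintype.card_le_one_iff_subsingleton]; omega
    have hphi0 : phi G = 0 := by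
      have hempty : { r | ∃ U : Finset V, U.Nonempty ∧
          ((U \ vbdry G U).card : ℝ) ≤ (Fintype.card V : ℝ) / 2 ∧
          r = ((vbdry G U).card : ℝ) / (U.card : ℝ) } = ∅ := by
        ext r
        simp only [Set.mem_setOf_eq, Set.mem_empty_iff_false, iff_false, not_exists]
        rintro U ⟨hUne, hhalf, rfl⟩
        rw [hcard1] at hhalf
        have h0 : (U \ vbdry G U).card = 0 := by
          by_contra hcon
          have h1 : 1 ≤ (U \ vbdry G U).card := Nat.one_le_iff_ne_zero.2 hcon
          have : (1:ℝ) ≤ ((U \ vbdry G U).card : ℝ) := by exact_mod_cast h1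
          norm_num at hhalf
          linarith
        have hsubset : U ⊆ vbdry G U := by
          rw [← Finset.sdiff_eq_empty_iff_subset]
          exact Finset.card_eq_zero.1 h0
        obtain ⟨v, hv⟩ := hUne
        obtain ⟨hvU, u, huU, hadj⟩ := Finset.mem_filter.1 (hsubset hv)
        have huv : u = v := Subsingleton.elim u v
        exact G.irrefl (huv ▸ hadj)
      rw [phi, hempty, Real.sInf_empty]
    rw [hphi0]
    have hcs : csobs G ≤ 0 := by
      apply Real.sSup_le _ le_rfl
      rintro s ⟨ω, hω, havg, rfl⟩
      apply Real.sSup_le _ le_rfl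
      rintro s' ⟨f, hf, rfl⟩
      have hz : ∀ x y : V, |f x - f y| = 0 := by
        intro x y
        rw [Subsingleton.elim x y]
        simp
      simp [hz]
    simp only [div_zero]
    linarith

end
end

section
/- If Ĝ is a region intersection graph over G and Ĝ has a careful H-minor, then G has an H-minor. -/
noncomputable section

open SimpleGraph

lemma induce_singleton_connected {V : Type*} (G : SimpleGraph V) (v : V) :
    (G.induce ({v} : Set V)).Connected := by
  have hne : Nonempty ↥({v} : Set V) := ⟨⟨v, rfl⟩⟩
  refine ⟨fun x y => ?_⟩
  have hxy : x = y := Subtype.ext (x.2.trans y.2.symm)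
  rw [hxy]

-- walk from connected induced set, staying inside it
lemma exists_walk_in_set {V : Type*} {G : SimpleGraph V} {s : Set V}
    (hs : (G.induce s).Connected) {a b : V} (ha : a ∈ s) (hb : b ∈ s) :
    ∃ p : G.Walk a b, {v | v ∈ p.support} ⊆ s := by
  rw [connected_induce_iff] at hs
  obtain ⟨-, hws⟩ := (Subgraph.connected_iff_forall_exists_walk_subgraph _).1 hs
  obtain ⟨p, hp⟩ := hws ha hb
  refine ⟨p, ?_⟩
  intro v hv
  have := hp.1
  rw [Subgraph.induce_verts] at this
  exact this (p.mem_verts_toSubgraph.2 hv)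

-- union over walk support of connected intersecting sets is connected
lemma walk_union_connected {W V : Type*} (G : SimpleGraph V) (K : SimpleGraph W)
    (R : W → Set V) (hR : ∀ w, (G.induce (R w)).Connected)
    (hadj : ∀ w w', K.Adj w w' → (R w ∩ R w').Nonempty) :
    ∀ {a b : W} (p : K.Walk a b), (G.induce (⋃ x ∈ {w | w ∈ p.support}, R x)).Connected := by
  intro a b p
  induction p with
  | @nil w =>
      have h : (⋃ x ∈ {w' | w' ∈ (SimpleGraph.Walk.nil : K.Walk w w).support}, R x) = R w := by
        ext v; simp
      rw [h]; exact hR w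
  | @cons w x y h q ih =>
      have : (⋃ z ∈ {w' | w' ∈ (SimpleGraph.Walk.cons h q).support}, R z)
          = R w ∪ ⋃ z ∈ {w' | w' ∈ q.support}, R z := by
        ext v
        simp [SimpleGraph.Walk.support_cons]
      rw [this]
      refine induce_union_connected (hR w).preconnected ih.preconnected ?_
      obtain ⟨z, hz1, hz2⟩ := hadj w x h
      exact ⟨z, hz1, Set.mem_biUnion (by simp) hz2⟩

lemma biUnion_connected {W V : Type*} (G : SimpleGraph V) (K : SimpleGraph W)
    (R : W → Set V) (hR : ∀ w, (G.induce (R w)).Connected)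
    (hadj : ∀ w w', K.Adj w w' → (R w ∩ R w').Nonempty)
    (S : Set W) (hS : (K.induce S).Connected) :
    (G.induce (⋃ w ∈ S, R w)).Connected := by
  obtain ⟨w0, hw0⟩ : S.Nonempty := by
    obtain ⟨⟨w0, hw0⟩⟩ := hS.nonempty
    exact ⟨w0, hw0⟩
  obtain ⟨⟨v0, hv0⟩⟩ := (hR w0).nonempty
  apply G.induce_connected_of_patches v0 (Set.mem_biUnion hw0 hv0)
  intro v hv
  obtain ⟨w, hwS, hvw⟩ := Set.mem_iUnion₂.1 hv
  obtain ⟨q, hq⟩ := exists_walk_in_set hS hw0 hwS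
  refine ⟨⋃ x ∈ {w' | w' ∈ q.support}, R x, ?_, ?_, ?_, ?_⟩
  · intro z hz
    obtain ⟨x, hx, hzx⟩ := Set.mem_iUnion₂.1 hz
    exact Set.mem_biUnion (hq hx) hzx
  · exact Set.mem_biUnion (by simp) hv0
  · exact Set.mem_biUnion (by simp) hvw
  · exact (walk_union_connected G K R hR hadj q).preconnected _ _

-- walk surgery
lemma walk_surgery {V : Type*} {G : SimpleGraph V} {a b : V} (p : G.Walk a b)
    (X Y : Set V) (hX : (G.induce X).Connected) (ha : a ∈ X) (hb : b ∈ Y)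
    (hdisj : Disjoint X Y) :
    ∃ (P : Set V) (x y : V), P ⊆ {v | v ∈ p.support} ∧ P ∩ Y = ∅ ∧
      (G.induce (X ∪ P)).Connected ∧ x ∈ X ∪ P ∧ y ∈ Y ∧ G.Adj x y := by
  induction p generalizing X with
  | nil =>
      exact absurd hb (Set.disjoint_left.1 hdisj ha)
  | @cons a c b h q ih =>
      by_cases hcY : c ∈ Y
      · refine ⟨∅, a, c, by simp, by simp, by rw [Set.union_empty]; exact hX, Or.inl ha, hcY, h⟩
      · by_cases hcX : c ∈ X
        · obtain ⟨P, x, y, h1, h2, h3, h4, h5, h6⟩ := ih X hX hcX hb hdisj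
          refine ⟨P, x, y, ?_, h2, h3, h4, h5, h6⟩
          intro v hv
          simp only [SimpleGraph.Walk.support_cons, Set.mem_setOf_eq, List.mem_cons]
          exact Or.inr (h1 hv)
        · have hX' : (G.induce (X ∪ {c})).Connected :=
            connected_induce_union hX.preconnected (induce_singleton_connected G c).preconnected ha rfl h
          have hdisj' : Disjoint (X ∪ {c}) Y := by
            rw [Set.disjoint_union_left]
            exact ⟨hdisj, by simpa using hcY⟩
          obtain ⟨P, x, y, h1, h2, h3, h4, h5, h6⟩ :=
            ih (X ∪ {c}) hX' (Or.inr rfl) hb hdisj'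
          refine ⟨P ∪ {c}, x, y, ?_, ?_, ?_, ?_, h5, h6⟩
          · intro v hv
            simp only [SimpleGraph.Walk.support_cons, Set.mem_setOf_eq, List.mem_cons]
            rcases hv with hv | hv
            · exact Or.inr (h1 hv)
            · have hvc : v = c := hv
              exact Or.inr (hvc ▸ q.start_mem_support)
          · rw [Set.union_inter_distrib_right, h2, Set.empty_union]
            exact Set.singleton_inter_eq_empty.2 hcY
          · have : X ∪ (P ∪ {c}) = X ∪ {c} ∪ P := by
              ext; simp; tauto
            rw [this]; exact h3
          · rcases h4 with h4 | h4
            · rcases h4 with h4 | h4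
              · exact Or.inl h4
              · exact Or.inr (Or.inr h4)
            · exact Or.inr (Or.inl h4)



/-- `H` is a minor of `G`, witnessed by pairwise-disjoint connected branch sets. -/
def IsMinor {V U : Type*} (G : SimpleGraph V) (H : SimpleGraph U) : Prop :=
  ∃ A : U → Set V, (∀ u : U, (G.induce (A u)).Connected) ∧
    Pairwise (Function.onFun Disjoint A) ∧
    ∀ u v : U, H.Adj u v → ∃ a ∈ A u, ∃ b ∈ A v, G.Adj a b

/-- `H` is a strict minor of `G`: branch sets with edges between `A u` and `A v`
*exactly* when `{u,v}` is an edge of `H`. -/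
def IsStrictMinor {V U : Type*} (G : SimpleGraph V) (H : SimpleGraph U) : Prop :=
  ∃ A : U → Set V, (∀ u : U, (G.induce (A u)).Connected) ∧
    Pairwise (Function.onFun Disjoint A) ∧
    ∀ u v : U, u ≠ v → (H.Adj u v ↔ ∃ a ∈ A u, ∃ b ∈ A v, G.Adj a b)

/-- The subdivision `Ḣ` of `H`: every edge is replaced by a path of length two
through a new vertex. -/
def subdiv {U : Type*} (H : SimpleGraph U) : SimpleGraph (U ⊕ H.edgeSet) where
  Adj a b :=
    match a, b with
    | Sum.inl u, Sum.inr e => u ∈ (e : Sym2 U)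
    | Sum.inr e, Sum.inl u => u ∈ (e : Sym2 U)
    | _, _ => False
  symm := ⟨by rintro (u | e) (v | f) h <;> simp_all⟩
  loopless := ⟨by rintro (u | e) h <;> simp_all⟩

/-- `H` is a careful minor of `G` if the subdivision of `H` is a strict minor of `G`. -/
def IsCarefulMinor {V U : Type*} (G : SimpleGraph V) (H : SimpleGraph U) : Prop :=
  IsStrictMinor G (subdiv H)

/-- `Ĝ` is a region intersection graph over `G`. -/
def IsRig {W V : Type*} (Ghat : SimpleGraph W) (G : SimpleGraph V) : Prop :=
  ∃ R : W → Set V, (∀ u : W, (G.induce (R u)).Connected) ∧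
    ∀ u v : W, u ≠ v → (Ghat.Adj u v ↔ (R u ∩ R v).Nonempty)

theorem stmt13 {V W U : Type*} (G : SimpleGraph V) (Ghat : SimpleGraph W)
    (H : SimpleGraph U) (hrig : IsRig Ghat G) (hmin : IsCarefulMinor Ghat H) :
    IsMinor G H := by
  classical
  obtain ⟨R, hRconn, hRiff⟩ := hrig
  obtain ⟨A, hAconn, hAdisj, hAiff⟩ := hmin
  set Q : (U ⊕ H.edgeSet) → Set V := fun a => ⋃ w ∈ A a, R w with hQdef
  have hGadj : ∀ w w', Ghat.Adj w w' → (R w ∩ R w').Nonempty := fun w w' h =>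
    (hRiff w w' h.ne).1 h
  have hQconn : ∀ a, (G.induce (Q a)).Connected := fun a =>
    biUnion_connected G Ghat R hRconn hGadj (A a) (hAconn a)
  have hQne : ∀ a, (Q a).Nonempty := fun a => by
    obtain ⟨⟨x, hx⟩⟩ := (hQconn a).nonempty
    exact ⟨x, hx⟩
  have hQdisj : ∀ a b, a ≠ b → ¬ (subdiv H).Adj a b → ∀ x, x ∈ Q a → x ∉ Q b := by
    intro a b hab hnadj x hxa hxb
    obtain ⟨w, hw, hxw⟩ := Set.mem_iUnion₂.1 hxa
    obtain ⟨w', hw', hxw'⟩ := Set.mem_iUnion₂.1 hxb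
    by_cases hww : w = w'
    · exact Set.disjoint_left.1 (hAdisj hab) hw (hww ▸ hw')
    · have hadj : Ghat.Adj w w' := (hRiff w w' hww).2 ⟨x, hxw, hxw'⟩
      exact hnadj ((hAiff a b hab).2 ⟨w, hw, w', hw', hadj⟩)
  have hQtouch : ∀ a b, a ≠ b → (subdiv H).Adj a b → (Q a ∩ Q b).Nonempty := by
    intro a b hab hadj
    obtain ⟨w, hw, w', hw', hG⟩ := (hAiff a b hab).1 hadj
    obtain ⟨x, hx1, hx2⟩ := (hRiff w w' hG.ne).1 hG
    exact ⟨x, Set.mem_biUnion hw hx1, Set.mem_biUnion hw' hx2⟩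
  have hsub_ll : ∀ (u u' : U), ¬ (subdiv H).Adj (Sum.inl u) (Sum.inl u') := fun _ _ h => h
  have hsub_rr : ∀ (e f : H.edgeSet), ¬ (subdiv H).Adj (Sum.inr e) (Sum.inr f) := fun _ _ h => h
  -- key per-edge construction
  have key : ∀ e : H.edgeSet, ∃ (u v : U) (P : Set V) (x y : V),
      (e : Sym2 U) = s(u, v) ∧ P ⊆ Q (Sum.inr e) ∧ P ∩ Q (Sum.inl v) = ∅ ∧
      (G.induce (Q (Sum.inl u) ∪ P)).Connected ∧
      x ∈ Q (Sum.inl u) ∪ P ∧ y ∈ Q (Sum.inl v) ∧ G.Adj x y := by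
    rintro ⟨s, hs⟩
    induction s using Sym2.ind with
    | _ u v =>
    have hadjH : H.Adj u v := hs
    have huv : u ≠ v := hadjH.ne
    set e : H.edgeSet := ⟨s(u, v), hs⟩ with hedef
    have h1 : (subdiv H).Adj (Sum.inl u) (Sum.inr e) := by
      show u ∈ (s(u, v) : Sym2 U)
      exact Sym2.mem_mk_left u v
    have h2 : (subdiv H).Adj (Sum.inl v) (Sum.inr e) := by
      show v ∈ (s(u, v) : Sym2 U)
      exact Sym2.mem_mk_right u v
    obtain ⟨a, haX, haS⟩ := hQtouch (Sum.inl u) (Sum.inr e) (by simp) h1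
    obtain ⟨b, hbY, hbS⟩ := hQtouch (Sum.inl v) (Sum.inr e) (by simp) h2
    obtain ⟨p, hsupp⟩ := exists_walk_in_set (hQconn (Sum.inr e)) haS hbS
    have hdisjXY : Disjoint (Q (Sum.inl u)) (Q (Sum.inl v)) :=
      Set.disjoint_left.2 (hQdisj (Sum.inl u) (Sum.inl v) (by simp [huv]) (hsub_ll u v))
    obtain ⟨P, x, y, hP1, hP2, hP3, hP4, hP5, hP6⟩ :=
      walk_surgery p (Q (Sum.inl u)) (Q (Sum.inl v))
        (hQconn (Sum.inl u)) haX hbY hdisjXY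
    exact ⟨u, v, P, x, y, rfl, hP1.trans hsupp, hP2, hP3, hP4, hP5, hP6⟩
  choose ue ve Pe xe ye heq hPsub hPv hPconn hx hy hxy using key
  set B : U → Set V := fun u =>
    Q (Sum.inl u) ∪ ⋃ (e : H.edgeSet) (_ : ue e = u), Pe e with hBdef
  have hPeB : ∀ e : H.edgeSet, Pe e ⊆ B (ue e) := by
    intro e z hz
    exact Or.inr (Set.mem_iUnion.2 ⟨e, Set.mem_iUnion.2 ⟨rfl, hz⟩⟩)
  have hQB : ∀ u : U, Q (Sum.inl u) ⊆ B u := fun u => Set.subset_union_left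
  -- membership in B decomposes
  have hBcases : ∀ (u : U) (z : V), z ∈ B u →
      z ∈ Q (Sum.inl u) ∨ ∃ e : H.edgeSet, ue e = u ∧ z ∈ Pe e := by
    intro u z hz
    rcases hz with hz | hz
    · exact Or.inl hz
    · obtain ⟨e, he⟩ := Set.mem_iUnion.1 hz
      obtain ⟨he1, he2⟩ := Set.mem_iUnion.1 he
      exact Or.inr ⟨e, he1, he2⟩
  -- Pe e avoids Q (inl u') for u' ≠ ue e
  have hPeQ : ∀ (e : H.edgeSet) (u' : U), u' ≠ ue e → ∀ z ∈ Pe e, z ∉ Q (Sum.inl u') := by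
    intro e u' hne z hz hz'
    by_cases hve : u' = ve e
    · have : z ∈ Pe e ∩ Q (Sum.inl (ve e)) := ⟨hz, hve ▸ hz'⟩
      rw [hPv e] at this
      exact this
    · have hnotmem : u' ∉ (e : Sym2 U) := by
        rw [heq e, Sym2.mem_iff]
        push_neg
        exact ⟨hne, hve⟩
      have hnadj : ¬ (subdiv H).Adj (Sum.inr e) (Sum.inl u') := hnotmem
      exact hQdisj (Sum.inr e) (Sum.inl u') (by simp) hnadj z (hPsub e hz) hz'
  refine ⟨B, ?_, ?_, ?_⟩
  · -- connectivity
    intro u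
    obtain ⟨v1, hv1⟩ := hQne (Sum.inl u)
    apply G.induce_connected_of_patches v1 (hQB u hv1)
    intro z hz
    rcases hBcases u z hz with hzQ | ⟨e, heu, hze⟩
    · exact ⟨Q (Sum.inl u), hQB u, hv1, hzQ,
        (hQconn (Sum.inl u)).preconnected _ _⟩
    · refine ⟨Q (Sum.inl u) ∪ Pe e, ?_, Or.inl hv1, Or.inr hze, ?_⟩
      · intro w hw
        rcases hw with hw | hw
        · exact hQB u hw
        · exact heu ▸ hPeB e hw
      · have := hPconn e
        rw [heu] at this
        exact this.preconnected _ _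
  · -- disjointness
    intro u u' huu'
    rw [Function.onFun_apply, Set.disjoint_left]
    intro z hzu hzu'
    rcases hBcases u z hzu with h1 | ⟨e, he1, he2⟩ <;>
      rcases hBcases u' z hzu' with h2 | ⟨f, hf1, hf2⟩
    · exact hQdisj (Sum.inl u) (Sum.inl u') (by simpa using huu') (hsub_ll u u') z h1 h2
    · exact hPeQ f u (by rw [hf1]; exact huu') z hf2 h1
    · exact hPeQ e u' (by rw [he1]; exact huu'.symm) z he2 h2
    · have hef : e ≠ f := by
        intro hef
        exact huu' (he1 ▸ hef ▸ hf1)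
      exact hQdisj (Sum.inr e) (Sum.inr f) (by simpa using hef) (hsub_rr e f) z
        (hPsub e he2) (hPsub f hf2)
  · -- edges
    intro u v hadj
    have hs : s(u, v) ∈ H.edgeSet := hadj
    set e : H.edgeSet := ⟨s(u, v), hs⟩ with hedef
    have heq' : s(u, v) = s(ue e, ve e) := heq e
    rw [Sym2.eq_iff] at heq'
    rcases heq' with ⟨hu, hv⟩ | ⟨hu, hv⟩
    · refine ⟨xe e, ?_, ye e, ?_, hxy e⟩
      · rcases hx e with h | h
        · exact hQB u (hu ▸ h)
        · exact hu ▸ hPeB e h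
      · exact hQB v (hv ▸ hy e)
    · refine ⟨ye e, hQB u (hu ▸ hy e), xe e, ?_, (hxy e).symm⟩
      rcases hx e with h | h
      · exact hQB v (hv ▸ h)
      · exact hv ▸ hPeB e h


end
end
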